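/- For the nearest-neighbor ring (k = 1), every twisted state with cos(2πq/N) < 0 (i.e., N/4 < |q mod N| < 3N/4) is linearly unstable: λ_{m,q} = 2cos(2πq/N)[cos(2πm/N) − 1] > 0 for every m ∈ {1,…,N−1}. -/

import Mathlib

noncomputable def dftR (N : ℕ) (h : Fin N → ℝ) (m : ℤ) : ℂ :=
  ∑ k : Fin N, (h k : ℂ) * Complex.exp (-2 * Real.pi * Complex.I * m * (k : ℕ) / N)

lemma dftR_eq (N : ℕ) (hN : 3 ≤ N) (h : Fin N → ℝ)
    (hh : ∀ j : Fin N, h j = if (j : ℕ) = 1 ∨ (j : ℕ) = N - 1 then 1 else 0)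
    (p : ℤ) : dftR N h p = ((2 * Real.cos (2 * Real.pi * p / N) : ℝ) : ℂ) := by
  classical
  have hNc : (N : ℂ) ≠ 0 := Nat.cast_ne_zero.mpr (by omega)
  set i1 : Fin N := ⟨1, by omega⟩ with hi1
  set i2 : Fin N := ⟨N - 1, by omega⟩ with hi2
  have hne : i1 ≠ i2 := by
    simp only [hi1, hi2, Fin.mk.injEq, ne_eq]; omega
  have hsum : dftR N h p =
      ∑ k ∈ ({i1, i2} : Finset (Fin N)),
        (h k : ℂ) * Complex.exp (-2 * Real.pi * Complex.I * p * (k : ℕ) / N) := by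
    refine (Finset.sum_subset (Finset.subset_univ _) ?_).symm
    intro k _ hk
    simp only [Finset.mem_insert, Finset.mem_singleton] at hk
    push_neg at hk
    have h1 : ¬((k : ℕ) = 1 ∨ (k : ℕ) = N - 1) := by
      rintro (h' | h')
      · exact hk.1 (Fin.ext (by simp [hi1, h']))
      · exact hk.2 (Fin.ext (by simp [hi2, h']))
    rw [hh k, if_neg h1]
    simp
  rw [hsum, Finset.sum_pair hne, hh i1, hh i2]
  have hv1 : ((i1 : Fin N) : ℕ) = 1 := rfl
  have hv2 : ((i2 : Fin N) : ℕ) = N - 1 := rfl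
  rw [if_pos (Or.inl hv1), if_pos (Or.inr hv2), hv1, hv2]
  set θ : ℝ := 2 * Real.pi * p / N with hθ
  have e1 : (-2 * (Real.pi : ℂ) * Complex.I * p * (1 : ℕ) / N) = (-θ : ℂ) * Complex.I := by
    rw [hθ]
    push_cast
    ring
  have hN1 : ((N - 1 : ℕ) : ℂ) = (N : ℂ) - 1 := by
    push_cast [Nat.cast_sub (by omega : 1 ≤ N)]; ring
  have e2 : Complex.exp (-2 * (Real.pi : ℂ) * Complex.I * p * ((N - 1 : ℕ) : ℂ) / N)
      = Complex.exp ((θ : ℂ) * Complex.I) := by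
    have : (-2 * (Real.pi : ℂ) * Complex.I * p * ((N - 1 : ℕ) : ℂ) / N)
        = (-p : ℤ) * (2 * Real.pi * Complex.I) + (θ : ℂ) * Complex.I := by
      rw [hN1]; push_cast [hθ]; field_simp; ring
    rw [this, Complex.exp_add, Complex.exp_int_mul_two_pi_mul_I, one_mul]
  rw [e1, e2]
  push_cast [Complex.ofReal_cos]
  rw [Complex.two_cos]
  ring

/-- Nearest-neighbor ring: twisted states with cos(2πq/N) < 0 are linearly unstable in
every direction m ∈ {1,…,N−1}. -/
theorem stmt_15 (N : ℕ) (hN : 3 ≤ N) (h : Fin N → ℝ)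
    (hh : ∀ j : Fin N, h j = if (j : ℕ) = 1 ∨ (j : ℕ) = N - 1 then 1 else 0)
    (q : ℤ) (hq : Real.cos (2 * Real.pi * q / N) < 0) :
    ∀ m : ℤ, 1 ≤ m → m ≤ (N : ℤ) - 1 →
      0 < ((dftR N h (q + m) + dftR N h (q - m)) / 2 - dftR N h q).re := by
  intro m hm1 hm2
  have hNR : (0 : ℝ) < N := by positivity
  have key : ((dftR N h (q + m) + dftR N h (q - m)) / 2 - dftR N h q)
      = (((2 * Real.cos (2 * Real.pi * (q + m) / N) + 2 * Real.cos (2 * Real.pi * (q - m) / N)) / 2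
          - 2 * Real.cos (2 * Real.pi * q / N) : ℝ) : ℂ) := by
    rw [dftR_eq N hN h hh, dftR_eq N hN h hh, dftR_eq N hN h hh]
    push_cast
    ring
  rw [key, Complex.ofReal_re]
  have ha : 2 * Real.pi * ((q : ℝ) + m) / N = 2 * Real.pi * q / N + 2 * Real.pi * m / N := by
    field_simp
  have hb : 2 * Real.pi * ((q : ℝ) - m) / N = 2 * Real.pi * q / N - 2 * Real.pi * m / N := by
    field_simp
  rw [ha, hb, Real.cos_add, Real.cos_sub]
  -- cos(2πm/N) < 1
  have hπ := Real.pi_pos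
  have hd1 : 0 < 2 * Real.pi * m / N := by
    apply div_pos _ hNR
    have : (0:ℝ) < (m:ℝ) := by exact_mod_cast hm1.trans_lt' (by norm_num)
    positivity
  have hd2 : 2 * Real.pi * m / N < 2 * Real.pi := by
    rw [div_lt_iff₀ hNR]
    have hmN : (m : ℝ) < N := by
      have : (m : ℝ) ≤ (N : ℝ) - 1 := by exact_mod_cast hm2
      linarith
    nlinarith
  have hcos1 : Real.cos (2 * Real.pi * m / N) < 1 := by
    rcases lt_or_eq_of_le (Real.cos_le_one (2 * Real.pi * m / N)) with h' | h'
    · exact h'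
    · exfalso
      have := (Real.cos_eq_one_iff_of_lt_of_lt (by linarith) hd2).mp h'
      linarith
  nlinarith [mul_pos (neg_pos.mpr hq) (sub_pos.mpr hcos1)]
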